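/- Let V be finite, and suppose the densities ρ₊,ₘ(r) = −v₊,ₘ⁻¹ exp(F₊^{(m)}(r))(s_m − ∫₀ʳ (λ₊,ₘ(x) + ∑_k s_k p_{km}(−,+,x)) exp(−F₊^{(m)}(x))dx) with compactly supported data. Then ρ₊,ₘ(r) ≥ 0 for all r ≥ 0 and all m if and only if for all m: s_m ≥ λ̂₊,ₘ + ∑_k s_k α_{km}(−,+), where λ̂₊,ₘ = ∫₀^∞ λ₊,ₘ(x) exp(−F₊^{(m)}(x))dx and α_{km}(−,+) = ∫₀^∞ p_{km}(−,+,x) exp(−F₊^{(m)}(x))dx. -/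

import Mathlib

open Real MeasureTheory Set Finset

/-- The multi-market stationary densities are nonnegative for all `r ≥ 0` and all
markets `m` if and only if `s_m ≥ λ̂₊,ₘ + ∑_k s_k α_{km}(−,+)` for all `m`. -/
theorem multimarket_densities_nonneg_iff
    {V : Type*} [Fintype V]
    (vp : V → ℝ) (hvp : ∀ m, vp m < 0)
    (μp lp : V → ℝ → ℝ) (p : V → V → ℝ → ℝ)
    (hμc : ∀ m, Continuous (μp m)) (hlc : ∀ m, Continuous (lp m))
    (hpc : ∀ k m, Continuous (p k m))
    (hμ0 : ∀ m r, 0 ≤ r → 0 ≤ μp m r) (hl0 : ∀ m r, 0 ≤ r → 0 ≤ lp m r)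
    (hp0 : ∀ k m r, 0 ≤ r → 0 ≤ p k m r)
    (hμs : ∀ m, HasCompactSupport (μp m)) (hls : ∀ m, HasCompactSupport (lp m))
    (hps : ∀ k m, HasCompactSupport (p k m))
    (s : V → ℝ) (hs : ∀ k, 0 ≤ s k) :
    let F : V → ℝ → ℝ := fun m x => -(vp m)⁻¹ * ∫ y in (0:ℝ)..x, μp m y
    let ρ : V → ℝ → ℝ := fun m r =>
      -(vp m)⁻¹ * Real.exp (F m r) *
        (s m - ∫ x in (0:ℝ)..r,
          (lp m x + ∑ k, s k * p k m x) * Real.exp (-F m x))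
    let lhat : V → ℝ := fun m => ∫ x in Ioi (0:ℝ), lp m x * Real.exp (-F m x)
    let α : V → V → ℝ := fun k m => ∫ x in Ioi (0:ℝ), p k m x * Real.exp (-F m x)
    (∀ m, ∀ r, 0 ≤ r → 0 ≤ ρ m r) ↔
      ∀ m, lhat m + ∑ k, s k * α k m ≤ s m := by
  intro F ρ lhat α
  -- positivity of the prefactor
  have hc : ∀ m, 0 < -(vp m)⁻¹ := fun m => neg_pos.mpr (inv_lt_zero.mpr (hvp m))
  have hFc : ∀ m, Continuous (F m) := fun m =>
    continuous_const.mul (intervalIntegral.continuous_primitive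
      (fun a b => (hμc m).intervalIntegrable a b) 0)
  have hec : ∀ m, Continuous (fun x => Real.exp (-F m x)) := fun m =>
    Real.continuous_exp.comp (hFc m).neg
  set g : V → ℝ → ℝ :=
    fun m x => (lp m x + ∑ k, s k * p k m x) * Real.exp (-F m x) with hgdef
  have hgc : ∀ m, Continuous (g m) := fun m =>
    ((hlc m).add (continuous_finset_sum _ fun k _ => continuous_const.mul (hpc k m))).mul (hec m)
  have hg0 : ∀ m x, 0 ≤ x → 0 ≤ g m x := by
    intro m x hx
    have h1 : 0 ≤ lp m x + ∑ k, s k * p k m x :=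
      add_nonneg (hl0 m x hx)
        (Finset.sum_nonneg fun k _ => mul_nonneg (hs k) (hp0 k m x hx))
    exact mul_nonneg h1 (Real.exp_pos _).le
  have hgs : ∀ m, HasCompactSupport (g m) := by
    intro m
    apply HasCompactSupport.intro
      ((hls m).union (isCompact_iUnion fun k => (hps k m)))
    intro x hx
    simp only [Set.mem_union, Set.mem_iUnion, not_or, not_exists] at hx
    have h1 : lp m x = 0 := image_eq_zero_of_notMem_tsupport hx.1
    have h2 : ∀ k, p k m x = 0 := fun k => image_eq_zero_of_notMem_tsupport (hx.2 k)
    simp [hgdef, h1, h2]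
  -- a bound beyond which g vanishes
  have hR : ∀ m, ∃ R : ℝ, 0 ≤ R ∧ ∀ x, R ≤ x → g m x = 0 := by
    intro m
    obtain ⟨R, hRub⟩ := (hgs m).isCompact.bddAbove
    refine ⟨|R| + 1, by positivity, fun x hx => ?_⟩
    apply image_eq_zero_of_notMem_tsupport
    intro hmem
    have := hRub hmem
    have : x ≤ |R| := this.trans (le_abs_self R)
    linarith
  -- integrability facts
  have hintg : ∀ m, IntegrableOn (g m) (Ioi 0) := fun m =>
    ((hgc m).integrable_of_hasCompactSupport (hgs m)).integrableOn
  have hintl : ∀ m, IntegrableOn (fun x => lp m x * Real.exp (-F m x)) (Ioi 0) := fun m =>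
    (((hlc m).mul (hec m)).integrable_of_hasCompactSupport
      ((hls m).mul_right)).integrableOn
  have hintp : ∀ k m, IntegrableOn (fun x => p k m x * Real.exp (-F m x)) (Ioi 0) :=
    fun k m => (((hpc k m).mul (hec m)).integrable_of_hasCompactSupport
      ((hps k m).mul_right)).integrableOn
  -- splitting the full integral
  have hsplit : ∀ m, ∫ x in Ioi (0:ℝ), g m x = lhat m + ∑ k, s k * α k m := by
    intro m
    have heq : ∀ x, g m x
        = lp m x * Real.exp (-F m x) + ∑ k, s k * (p k m x * Real.exp (-F m x)) := by
      intro x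
      simp [hgdef, add_mul, Finset.sum_mul, mul_assoc]
    calc ∫ x in Ioi (0:ℝ), g m x
        = ∫ x in Ioi (0:ℝ),
            (lp m x * Real.exp (-F m x) + ∑ k, s k * (p k m x * Real.exp (-F m x))) := by
          exact integral_congr_ae (Filter.Eventually.of_forall fun x => heq x)
      _ = (∫ x in Ioi (0:ℝ), lp m x * Real.exp (-F m x))
            + ∫ x in Ioi (0:ℝ), ∑ k, s k * (p k m x * Real.exp (-F m x)) := by
          apply integral_add (hintl m)
          exact integrable_finset_sum _ fun k _ => (hintp k m).const_mul (s k)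
      _ = lhat m + ∑ k, s k * α k m := by
          congr 1
          rw [integral_finset_sum _ fun k _ => (hintp k m).const_mul (s k)]
          exact Finset.sum_congr rfl fun k _ => integral_const_mul _ _
  -- the Ioi integral equals the interval integral up to any vanishing point
  have hIoi : ∀ m R, 0 ≤ R → (∀ x, R ≤ x → g m x = 0) →
      ∫ x in Ioi (0:ℝ), g m x = ∫ x in (0:ℝ)..R, g m x := by
    intro m R hR0 hRz
    rw [intervalIntegral.integral_of_le hR0]
    have hunion : Set.Ioc (0:ℝ) R ∪ Set.Ioi R = Set.Ioi 0 := Set.Ioc_union_Ioi_eq_Ioi hR0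
    have hzero : ∫ x in Set.Ioi R, g m x = 0 := by
      rw [setIntegral_congr_fun measurableSet_Ioi
        (fun x hx => hRz x (le_of_lt hx) : ∀ x ∈ Set.Ioi R, g m x = (fun _ => (0:ℝ)) x)]
      simp
    rw [← hunion, setIntegral_union (Set.Ioc_disjoint_Ioi le_rfl) measurableSet_Ioi
        ((hintg m).mono_set (by rw [← hunion]; exact Set.subset_union_left))
        ((hintg m).mono_set (by rw [← hunion]; exact Set.subset_union_right)),
      hzero, add_zero]
  -- monotone bound: interval integrals are below the full integral
  have hbound : ∀ m r, 0 ≤ r → ∫ x in (0:ℝ)..r, g m x ≤ ∫ x in Ioi (0:ℝ), g m x := by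
    intro m r hr
    obtain ⟨R, hR0, hRz⟩ := hR m
    have hmax0 : (0:ℝ) ≤ max r R := le_trans hr (le_max_left _ _)
    have hIeq : ∫ x in Ioi (0:ℝ), g m x = ∫ x in (0:ℝ)..(max r R), g m x :=
      hIoi m (max r R) hmax0 (fun x hx => hRz x (le_trans (le_max_right _ _) hx))
    rw [hIeq]
    have hadd : (∫ x in (0:ℝ)..r, g m x) + ∫ x in r..(max r R), g m x
        = ∫ x in (0:ℝ)..(max r R), g m x :=
      intervalIntegral.integral_add_adjacent_intervals
        ((hgc m).intervalIntegrable _ _) ((hgc m).intervalIntegrable _ _)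
    have htail : 0 ≤ ∫ x in r..(max r R), g m x :=
      intervalIntegral.integral_nonneg (le_max_left _ _)
        (fun x hx => hg0 m x (le_trans hr hx.1))
    linarith
  -- the sign equivalence for ρ
  have hρ : ∀ m r, (0 ≤ ρ m r ↔ ∫ x in (0:ℝ)..r, g m x ≤ s m) := by
    intro m r
    have hcpos : 0 < -(vp m)⁻¹ * Real.exp (F m r) := mul_pos (hc m) (Real.exp_pos _)
    constructor
    · intro h
      have h' : 0 ≤ (-(vp m)⁻¹ * Real.exp (F m r)) *
          (s m - ∫ x in (0:ℝ)..r, g m x) := h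
      exact sub_nonneg.mp (nonneg_of_mul_nonneg_right h' hcpos)
    · intro h
      exact mul_nonneg hcpos.le (sub_nonneg.mpr h)
  constructor
  · intro h m
    obtain ⟨R, hR0, hRz⟩ := hR m
    have := (hρ m R).mp (h m R hR0)
    rw [← hsplit m, hIoi m R hR0 hRz]
    exact this
  · intro h m r hr
    apply (hρ m r).mpr
    calc ∫ x in (0:ℝ)..r, g m x ≤ ∫ x in Ioi (0:ℝ), g m x := hbound m r hr
      _ = lhat m + ∑ k, s k * α k m := hsplit m
      _ ≤ s m := h m
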